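/- Let g be a Riemannian metric in boundary harmonic coordinates on B⁺(x,r), and let N and Θ denote the outward-pointing unit normal and second fundamental form of B̲⁺(x,r), respectively. Then on B̲⁺(x,r) the inverse metric components satisfy the Neumann boundary relations N(g^{33}) = 2 (tr Θ) g^{33} and N(g^{3A}) = (tr Θ) g^{3A} − (1/2)(g^{33})^{−1/2} g^{Am} ∂_m g^{33} for A = 1,2 (summation over m = 1,2,3). -/

import Mathlib

noncomputable section

open Set MeasureTheory Filter Topology
open scoped ENNReal NNReal BigOperators

/-! ## Euclidean spaces, the upper half space and half balls -/

abbrev E3 : Type := EuclideanSpace ℝ (Fin 3)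
abbrev E2 : Type := EuclideanSpace ℝ (Fin 2)

/-- Matrix-valued coordinate representations of Riemannian metrics on (subsets of) `ℝ³`. -/
abbrev Met3 : Type := E3 → Matrix (Fin 3) (Fin 3) ℝ
/-- Matrix-valued coordinate representations of Riemannian metrics on (subsets of) `ℝ²`. -/
abbrev Met2 : Type := E2 → Matrix (Fin 2) (Fin 2) ℝ

def e3 (i : Fin 3) : E3 := EuclideanSpace.single i (1:ℝ)
def e2 (A : Fin 2) : E2 := EuclideanSpace.single A (1:ℝ)

/-- The closed upper half space `ℍ⁺ = {x ∈ ℝ³ : x³ ≥ 0}`. -/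
def upperHalf3 : Set E3 := {y : E3 | 0 ≤ y 2}

/-- The half ball `B⁺(x,r) = B(x,r) ∩ ℍ⁺`. -/
def Bplus (x : E3) (r : ℝ) : Set E3 := Metric.ball x r ∩ upperHalf3

/-- The flat boundary part `B̲⁺(x,r) = B⁺(x,r) ∩ {x³ = 0}`. -/
def BplusBot (x : E3) (r : ℝ) : Set E3 := Bplus x r ∩ {y : E3 | y 2 = 0}

/-- The inclusion of `ℝ²` into `ℝ³` as the plane `{x³ = 0}`. -/
def iota (z : E2) : E3 := z 0 • e3 0 + z 1 • e3 1

/-- `B̲⁺(x,r)`, viewed as a subset of `ℝ²`. -/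
def bot2 (x : E3) (r : ℝ) : Set E2 := {z : E2 | iota z ∈ BplusBot x r}

/-- The inclusion of boundary-tangential indices `{1,2}` into `{1,2,3}`. -/
def emb23 : Fin 2 → Fin 3 := Fin.castSucc

/-! ## Partial derivatives -/

/-- Partial derivative (within a set) in direction `i` for functions on `ℝ³`. -/
def pd3 (Ω : Set E3) (i : Fin 3) (f : E3 → ℝ) (y : E3) : ℝ := fderivWithin ℝ f Ω y (e3 i)

/-- Partial derivative (within a set) in direction `A` for functions on `ℝ²`. -/
def pd2 (Ω : Set E2) (A : Fin 2) (f : E2 → ℝ) (z : E2) : ℝ := fderivWithin ℝ f Ω z (e2 A)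

/-- Iterated coordinate partial derivatives `∂^σ` on `ℝ³`. -/
def iterPd3 (Ω : Set E3) : (k : ℕ) → (Fin k → Fin 3) → (E3 → ℝ) → (E3 → ℝ)
  | 0, _, f => f
  | k+1, σ, f => pd3 Ω (σ 0) (iterPd3 Ω k (fun a => σ a.succ) f)

/-- Iterated coordinate partial derivatives `∂̸^σ` on `ℝ²`. -/
def iterPd2 (Ω : Set E2) : (k : ℕ) → (Fin k → Fin 2) → (E2 → ℝ) → (E2 → ℝ)
  | 0, _, f => f
  | k+1, σ, f => pd2 Ω (σ 0) (iterPd2 Ω k (fun a => σ a.succ) f)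

/-! ## Christoffel symbols, curvature and associated operators in coordinates -/

/-- Christoffel symbols `Γ^k_{ij}` of a coordinate metric on `ℝ³`. -/
def Γ3 (Ω : Set E3) (G : Met3) (y : E3) (k i j : Fin 3) : ℝ :=
  (1/2) * ∑ l : Fin 3, (G y)⁻¹ k l *
    (pd3 Ω i (fun z => G z j l) y + pd3 Ω j (fun z => G z i l) y - pd3 Ω l (fun z => G z i j) y)

/-- Ricci curvature `Ric_{ij}` of a coordinate metric on `ℝ³`. -/
def Ric3 (Ω : Set E3) (G : Met3) (y : E3) (i j : Fin 3) : ℝ :=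
  (∑ k : Fin 3, pd3 Ω k (fun z => Γ3 Ω G z k i j) y)
  - (∑ k : Fin 3, pd3 Ω j (fun z => Γ3 Ω G z k i k) y)
  + ∑ k : Fin 3, ∑ l : Fin 3,
      (Γ3 Ω G y k k l * Γ3 Ω G y l i j - Γ3 Ω G y k j l * Γ3 Ω G y l i k)

/-- Ricci curvature with raised indices, `Ric^{ij} = g^{il} g^{jm} Ric_{lm}`. -/
def RicUp3 (Ω : Set E3) (G : Met3) (y : E3) (i j : Fin 3) : ℝ :=
  ∑ l : Fin 3, ∑ m : Fin 3, (G y)⁻¹ i l * (G y)⁻¹ j m * Ric3 Ω G y l m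

/-- Scalar curvature of a coordinate metric on `ℝ³`. -/
def Rscal3 (Ω : Set E3) (G : Met3) (y : E3) : ℝ :=
  ∑ i : Fin 3, ∑ j : Fin 3, (G y)⁻¹ i j * Ric3 Ω G y i j

/-- Contracted Christoffel symbols `g^{ij} Γ^k_{ij}`; these vanish iff the coordinates are
harmonic, i.e. `Δ_g x^k = 0`. -/
def contrΓ3 (Ω : Set E3) (G : Met3) (y : E3) (k : Fin 3) : ℝ :=
  ∑ i : Fin 3, ∑ j : Fin 3, (G y)⁻¹ i j * Γ3 Ω G y k i j

/-- The Laplace–Beltrami operator of a coordinate metric on `ℝ³`,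
`Δ_g u = g^{ij} ∂_i ∂_j u - g^{ij} Γ^k_{ij} ∂_k u`. -/
def lap3 (Ω : Set E3) (G : Met3) (u : E3 → ℝ) (y : E3) : ℝ :=
  (∑ i : Fin 3, ∑ j : Fin 3, (G y)⁻¹ i j * pd3 Ω i (pd3 Ω j u) y)
  - ∑ k : Fin 3, contrΓ3 Ω G y k * pd3 Ω k u y

/-- Christoffel symbols of a coordinate metric on `ℝ²`. -/
def Γ2 (Ω : Set E2) (H : Met2) (z : E2) (C A B : Fin 2) : ℝ :=
  (1/2) * ∑ D : Fin 2, (H z)⁻¹ C D *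
    (pd2 Ω A (fun w => H w B D) z + pd2 Ω B (fun w => H w A D) z - pd2 Ω D (fun w => H w A B) z)

/-- Ricci curvature of a coordinate metric on `ℝ²`. -/
def Ric2 (Ω : Set E2) (H : Met2) (z : E2) (A B : Fin 2) : ℝ :=
  (∑ C : Fin 2, pd2 Ω C (fun w => Γ2 Ω H w C A B) z)
  - (∑ C : Fin 2, pd2 Ω B (fun w => Γ2 Ω H w C A C) z)
  + ∑ C : Fin 2, ∑ D : Fin 2,
      (Γ2 Ω H z C C D * Γ2 Ω H z D A B - Γ2 Ω H z C B D * Γ2 Ω H z D A C)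

/-- Contracted Christoffel symbols on `ℝ²`. -/
def contrΓ2 (Ω : Set E2) (H : Met2) (z : E2) (C : Fin 2) : ℝ :=
  ∑ A : Fin 2, ∑ B : Fin 2, (H z)⁻¹ A B * Γ2 Ω H z C A B

/-- The Laplace–Beltrami operator of a coordinate metric on `ℝ²`. -/
def lap2 (Ω : Set E2) (H : Met2) (u : E2 → ℝ) (z : E2) : ℝ :=
  (∑ A : Fin 2, ∑ B : Fin 2, (H z)⁻¹ A B * pd2 Ω A (pd2 Ω B u) z)
  - ∑ C : Fin 2, contrΓ2 Ω H z C * pd2 Ω C u z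

/-- The Gauss curvature of a 2-dimensional coordinate metric (half its scalar curvature). -/
def K2 (Ω : Set E2) (H : Met2) (z : E2) : ℝ :=
  (1/2) * ∑ A : Fin 2, ∑ B : Fin 2, (H z)⁻¹ A B * Ric2 Ω H z A B

/-- The induced metric `g̸_{AB}` on the planes `{x³ = const}`. -/
def indMet (G : Met3) (y : E3) : Matrix (Fin 2) (Fin 2) ℝ :=
  Matrix.of fun A B => G y (emb23 A) (emb23 B)

/-- The induced boundary metric `g̸` as a 2-dimensional coordinate metric. -/
def Gb (G : Met3) : Met2 := fun z => indMet G (iota z)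

/-- The second fundamental form `Θ_{AB}` of the boundary plane `{x³ = 0}` (and of the level
sets of `x³`), with the convention `Θ(X,Y) = -g(X, ∇_Y N)`, `N` the outward unit normal
(pointing in the negative `x³`-direction). In coordinates `Θ_{AB} = -(g^{33})^{-1/2} Γ³_{AB}`. -/
def theta3 (Ω : Set E3) (G : Met3) (y : E3) (A B : Fin 2) : ℝ :=
  - (1 / Real.sqrt ((G y)⁻¹ 2 2)) * Γ3 Ω G y 2 (emb23 A) (emb23 B)

/-- Mean curvature `tr Θ` (trace with respect to the induced metric). -/
def trTheta (Ω : Set E3) (G : Met3) (y : E3) : ℝ :=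
  ∑ A : Fin 2, ∑ B : Fin 2, (indMet G y)⁻¹ A B * theta3 Ω G y A B

/-- Pointwise squared norm `|Θ|²` with respect to the induced metric. -/
def thetaSq (Ω : Set E3) (G : Met3) (y : E3) : ℝ :=
  ∑ A : Fin 2, ∑ B : Fin 2, ∑ C : Fin 2, ∑ D : Fin 2,
    (indMet G y)⁻¹ A C * (indMet G y)⁻¹ B D * theta3 Ω G y A B * theta3 Ω G y C D

/-- The action of the outward unit normal `N = -a ∇x³`, `a = (g^{33})^{-1/2}`, on functions:
`N(f) = -(g^{33})^{-1/2} g^{3k} ∂_k f`. -/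
def Nop (Ω : Set E3) (G : Met3) (f : E3 → ℝ) (y : E3) : ℝ :=
  - (1 / Real.sqrt ((G y)⁻¹ 2 2)) * ∑ k : Fin 3, (G y)⁻¹ 2 k * pd3 Ω k f y

/-- `Ric(N,N)` for the outward unit normal `N` of the level sets of `x³`. -/
def ricNN (Ω : Set E3) (G : Met3) (y : E3) : ℝ :=
  (1 / ((G y)⁻¹ 2 2)) * ∑ i : Fin 3, ∑ j : Fin 3, (G y)⁻¹ 2 i * (G y)⁻¹ 2 j * Ric3 Ω G y i j

/-! ## Boundary harmonic coordinates -/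

/-- The coordinates on `B⁺(x,r)` are *boundary harmonic* for the metric `G`:
`Δ_g x^j = 0` on `B⁺(x,r)` (for `j = 1,2,3`) and `Δ̸_g̸ x^A = 0` on `B̲⁺(x,r)` (for `A = 1,2`).
Since `Δ_g x^k = -g^{ij}Γ^k_{ij}`, this is expressed via vanishing of the contracted
Christoffel symbols. -/
def IsBdryHarmonic (x : E3) (r : ℝ) (G : Met3) : Prop :=
  (∀ y ∈ Bplus x r, ∀ k : Fin 3, contrΓ3 (Bplus x r) G y k = 0) ∧
  (∀ z ∈ bot2 x r, ∀ A : Fin 2, contrΓ2 (bot2 x r) (Gb G) z A = 0)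

/-- `G` is a smooth Riemannian metric (in coordinates) on `B⁺(x,r)`. -/
def IsRiemOnBplus (x : E3) (r : ℝ) (G : Met3) : Prop :=
  (∀ y ∈ Bplus x r, (G y).IsSymm ∧ (G y).PosDef) ∧
  ∀ i j : Fin 3, ContDiffOn ℝ (⊤ : ℕ∞) (fun y => G y i j) (Bplus x r)

/-! ## Covariant derivatives of the Ricci tensor -/

/-- Covariant derivative of a covariant `k`-tensor (in coordinates). -/
def covStep (Ω : Set E3) (G : Met3) (k : ℕ) (T : E3 → (Fin k → Fin 3) → ℝ) :
    E3 → (Fin (k+1) → Fin 3) → ℝ :=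
  fun y idx =>
    pd3 Ω (idx 0) (fun z => T z (fun a => idx a.succ)) y
    - ∑ b : Fin k, ∑ m : Fin 3,
        Γ3 Ω G y m (idx 0) (idx b.succ) * T y (Function.update (fun a => idx a.succ) b m)

/-- The iterated covariant derivatives `∇⁽ⁿ⁾Ric` (a covariant `(n+2)`-tensor). -/
def covRic (Ω : Set E3) (G : Met3) : (n : ℕ) → E3 → (Fin (n+2) → Fin 3) → ℝ
  | 0 => fun y idx => Ric3 Ω G y (idx 0) (idx 1)
  | n+1 => covStep Ω G (n+2) (covRic Ω G n)

/-- Pointwise squared norm of a covariant `k`-tensor with respect to `G`. -/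
def tensNormSq (G : Met3) (k : ℕ) (T : E3 → (Fin k → Fin 3) → ℝ) (y : E3) : ℝ :=
  ∑ idx : Fin k → Fin 3, ∑ idx' : Fin k → Fin 3,
    (∏ a : Fin k, (G y)⁻¹ (idx a) (idx' a)) * T y idx * T y idx'

/-- `‖∇⁽ⁿ⁾Ric‖_{L²(B⁺(x,r))}` (with respect to the Riemannian measure `√det g dy`). -/
def covRicL2 (x : E3) (r : ℝ) (G : Met3) (n : ℕ) : ℝ≥0∞ :=
  (∫⁻ y in Bplus x r,
    ENNReal.ofReal (tensNormSq G (n+2) (covRic (Bplus x r) G n) y * Real.sqrt |(G y).det|))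
  ^ (1/2 : ℝ)

/-- `‖Ric‖_{L²(B⁺(x,r))}`. -/
def ricL2 (x : E3) (r : ℝ) (G : Met3) : ℝ≥0∞ := covRicL2 x r G 0

/-- `‖Θ‖_{L⁴(B̲⁺(x,r))}`. -/
def thetaL4 (x : E3) (r : ℝ) (G : Met3) : ℝ≥0∞ :=
  (∫⁻ z in bot2 x r,
    ENNReal.ofReal ((thetaSq (Bplus x r) G (iota z))^2 * Real.sqrt |(Gb G z).det|))
  ^ (1/4 : ℝ)

/-! ## Sobolev norms (integer, fractional and negative order) -/

/-- `Σ_{k ≤ m} ∫_Ω ‖D^k f‖^p` on `ℝ³`. -/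
def lpPow3 (p : ℝ) (m : ℕ) (Ω : Set E3) (f : E3 → ℝ) : ℝ≥0∞ :=
  ∑ k ∈ Finset.range (m+1), ∫⁻ y in Ω, ENNReal.ofReal (‖iteratedFDerivWithin ℝ k f Ω y‖ ^ p)

/-- The `W^{m,p}(Ω)` norm for integer `m`, on `ℝ³`. -/
def wNormNat3 (p : ℝ) (m : ℕ) (Ω : Set E3) (f : E3 → ℝ) : ℝ≥0∞ := (lpPow3 p m Ω f) ^ (1/p)

/-- The Gagliardo (Sobolev–Slobodeckij) double integral for the `m`-th derivatives, on `ℝ³`. -/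
def gaglPow3 (p θ : ℝ) (m : ℕ) (Ω : Set E3) (f : E3 → ℝ) : ℝ≥0∞ :=
  ∫⁻ y in Ω, ∫⁻ z in Ω, ENNReal.ofReal
    (‖iteratedFDerivWithin ℝ m f Ω y - iteratedFDerivWithin ℝ m f Ω z‖ ^ p
      / ‖y - z‖ ^ (3 + θ * p))

/-- The `W^{s,p}(Ω)` norm for `s ≥ 0`, on `ℝ³`. -/
def wNormPos3 (p s : ℝ) (Ω : Set E3) (f : E3 → ℝ) : ℝ≥0∞ :=
  if s = (⌊s⌋₊ : ℝ) then wNormNat3 p ⌊s⌋₊ Ω f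
  else (lpPow3 p ⌊s⌋₊ Ω f + gaglPow3 p (s - ⌊s⌋₊) ⌊s⌋₊ Ω f) ^ (1/p)

/-- The `W^{s,p}(Ω)` norm for arbitrary `s ∈ ℝ` on `ℝ³`; for `s < 0` it is defined by duality
against smooth compactly supported test functions. -/
def wNorm3 (p s : ℝ) (Ω : Set E3) (f : E3 → ℝ) : ℝ≥0∞ :=
  if 0 ≤ s then wNormPos3 p s Ω f
  else sSup {c : ℝ≥0∞ | ∃ φ : E3 → ℝ, ContDiff ℝ (⊤ : ℕ∞) φ ∧ HasCompactSupport φ ∧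
    tsupport φ ⊆ Ω ∧ wNormPos3 (p/(p-1)) (-s) Ω φ ≤ 1 ∧
    c = ENNReal.ofReal |∫ y in Ω, f y * φ y|}

/-- The `L^p(Ω)` norm on `ℝ³`. -/
def lpNorm3 (p : ℝ) (Ω : Set E3) (f : E3 → ℝ) : ℝ≥0∞ :=
  (∫⁻ y in Ω, ENNReal.ofReal (|f y| ^ p)) ^ (1/p)

/-- Same definitions on `ℝ²` (with the dimension `2` in the Gagliardo exponent). -/
def lpPow2 (p : ℝ) (m : ℕ) (Ω : Set E2) (f : E2 → ℝ) : ℝ≥0∞ :=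
  ∑ k ∈ Finset.range (m+1), ∫⁻ z in Ω, ENNReal.ofReal (‖iteratedFDerivWithin ℝ k f Ω z‖ ^ p)

def wNormNat2 (p : ℝ) (m : ℕ) (Ω : Set E2) (f : E2 → ℝ) : ℝ≥0∞ := (lpPow2 p m Ω f) ^ (1/p)

def gaglPow2 (p θ : ℝ) (m : ℕ) (Ω : Set E2) (f : E2 → ℝ) : ℝ≥0∞ :=
  ∫⁻ y in Ω, ∫⁻ z in Ω, ENNReal.ofReal
    (‖iteratedFDerivWithin ℝ m f Ω y - iteratedFDerivWithin ℝ m f Ω z‖ ^ p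
      / ‖y - z‖ ^ (2 + θ * p))

def wNormPos2 (p s : ℝ) (Ω : Set E2) (f : E2 → ℝ) : ℝ≥0∞ :=
  if s = (⌊s⌋₊ : ℝ) then wNormNat2 p ⌊s⌋₊ Ω f
  else (lpPow2 p ⌊s⌋₊ Ω f + gaglPow2 p (s - ⌊s⌋₊) ⌊s⌋₊ Ω f) ^ (1/p)

def wNorm2 (p s : ℝ) (Ω : Set E2) (f : E2 → ℝ) : ℝ≥0∞ :=
  if 0 ≤ s then wNormPos2 p s Ω f
  else sSup {c : ℝ≥0∞ | ∃ φ : E2 → ℝ, ContDiff ℝ (⊤ : ℕ∞) φ ∧ HasCompactSupport φ ∧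
    tsupport φ ⊆ Ω ∧ wNormPos2 (p/(p-1)) (-s) Ω φ ≤ 1 ∧
    c = ENNReal.ofReal |∫ z in Ω, f z * φ z|}

def lpNorm2 (p : ℝ) (Ω : Set E2) (f : E2 → ℝ) : ℝ≥0∞ :=
  (∫⁻ z in Ω, ENNReal.ofReal (|f z| ^ p)) ^ (1/p)

/-- The `W^{s,p}(∂Ω)` norm of a boundary function, defined through the trace
characterization: the infimum of the `W^{s+1/p,p}(Ω)` norms of all extensions. -/
def bdryNorm3 (p s : ℝ) (Ω : Set E3) (h : E3 → ℝ) : ℝ≥0∞ :=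
  ⨅ (H : E3 → ℝ) (_ : Set.EqOn H h (frontier Ω)), wNorm3 p (s + 1/p) Ω H

/-- Hölder seminorm (valued in `ℝ≥0∞`) of a (vector valued) function on a subset of `ℝ³`. -/
def holderE {F : Type} [NormedAddCommGroup F] (α : ℝ) (S : Set E3) (f : E3 → F) : ℝ≥0∞ :=
  ⨆ y ∈ S, ⨆ z ∈ S, ENNReal.ofReal (‖f y - f z‖ / ‖y - z‖ ^ α)

/-- The `C^{m,β}` norm of a function on a subset of `ℝ³`. -/
def cNormHolder3 (m : ℕ) (β : ℝ) (S : Set E3) (f : E3 → ℝ) : ℝ≥0∞ :=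
  (∑ k ∈ Finset.range (m+1), ⨆ y ∈ S, ENNReal.ofReal ‖iteratedFDerivWithin ℝ k f S y‖)
  + holderE β S (fun y => iteratedFDerivWithin ℝ m f S y)

/-! ## Smooth domains and Riemannian metrics on them -/

/-- A *smooth domain*: a connected open set whose closure has smooth boundary
(defined locally by regular smooth level-set functions). -/
def SmoothDomain {E : Type} [NormedAddCommGroup E] [NormedSpace ℝ E] (Ω : Set E) : Prop :=
  IsOpen Ω ∧ IsConnected Ω ∧
  ∀ y ∈ frontier Ω, ∃ (V : Set E) (f : E → ℝ), IsOpen V ∧ y ∈ V ∧ ContDiff ℝ (⊤ : ℕ∞) f ∧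
    (∀ z ∈ V, fderiv ℝ f z ≠ 0) ∧ V ∩ closure Ω = V ∩ {z | f z ≤ 0}

def IsMetricOn3 (Ω : Set E3) (G : Met3) : Prop :=
  ∀ y ∈ Ω, (G y).IsSymm ∧ (G y).PosDef

def SmoothMetricOn3 (Ω : Set E3) (G : Met3) : Prop :=
  IsMetricOn3 Ω G ∧ ∀ i j : Fin 3, ContDiffOn ℝ (⊤ : ℕ∞) (fun y => G y i j) Ω

def UnifPosDef3 (Ω : Set E3) (G : Met3) : Prop :=
  ∃ c : ℝ, 0 < c ∧ ∀ y ∈ Ω, ∀ ξ : Fin 3 → ℝ,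
    c * ∑ i : Fin 3, (ξ i)^2 ≤ ∑ i : Fin 3, ∑ j : Fin 3, G y i j * ξ i * ξ j

def IsMetricOn2 (Ω : Set E2) (H : Met2) : Prop :=
  ∀ z ∈ Ω, (H z).IsSymm ∧ (H z).PosDef

def SmoothMetricOn2 (Ω : Set E2) (H : Met2) : Prop :=
  IsMetricOn2 Ω H ∧ ∀ A B : Fin 2, ContDiffOn ℝ (⊤ : ℕ∞) (fun z => H z A B) Ω

def UnifPosDef2 (Ω : Set E2) (H : Met2) : Prop :=
  ∃ c : ℝ, 0 < c ∧ ∀ z ∈ Ω, ∀ ξ : Fin 2 → ℝ,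
    c * ∑ A : Fin 2, (ξ A)^2 ≤ ∑ A : Fin 2, ∑ B : Fin 2, H z A B * ξ A * ξ B

/-- Weak convergence in `H^s(Ω)` (`Ω ⊆ ℝ²`): boundedness in norm plus distributional
convergence. -/
def WeakConv2 (s : ℝ) (Ω : Set E2) (Fn : ℕ → E2 → ℝ) (F : E2 → ℝ) : Prop :=
  (∃ C : ℝ≥0∞, C < ⊤ ∧ ∀ n, wNorm2 2 s Ω (Fn n) ≤ C) ∧
  ∀ φ : E2 → ℝ, ContDiff ℝ (⊤ : ℕ∞) φ → HasCompactSupport φ → tsupport φ ⊆ Ω →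
    Filter.Tendsto (fun n => ∫ z in Ω, (Fn n z - F z) * φ z) Filter.atTop (nhds 0)

/-- Weak convergence in `H^s(Ω)` (`Ω ⊆ ℝ³`). -/
def WeakConv3 (s : ℝ) (Ω : Set E3) (Fn : ℕ → E3 → ℝ) (F : E3 → ℝ) : Prop :=
  (∃ C : ℝ≥0∞, C < ⊤ ∧ ∀ n, wNorm3 2 s Ω (Fn n) ≤ C) ∧
  ∀ φ : E3 → ℝ, ContDiff ℝ (⊤ : ℕ∞) φ → HasCompactSupport φ → tsupport φ ⊆ Ω →
    Filter.Tendsto (fun n => ∫ y in Ω, (Fn n y - F y) * φ y) Filter.atTop (nhds 0)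

/-- `‖g - e‖_{H²(Ω)}` for a 3-dimensional coordinate metric (sum over components). -/
def metH2dev3 (Ω : Set E3) (G : Met3) : ℝ≥0∞ :=
  ∑ i : Fin 3, ∑ j : Fin 3,
    wNormNat3 2 2 Ω (fun y => G y i j - (1 : Matrix (Fin 3) (Fin 3) ℝ) i j)

/-- `‖g̸ - e‖_{H^{3/2}(Ω)}` for a 2-dimensional coordinate metric. -/
def metH32dev2 (Ω : Set E2) (H : Met2) : ℝ≥0∞ :=
  ∑ A : Fin 2, ∑ B : Fin 2,
    wNorm2 2 (3/2) Ω (fun z => H z A B - (1 : Matrix (Fin 2) (Fin 2) ℝ) A B)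

/-! ## The quadratic nonlinearities `Q` of boundary harmonic coordinates -/

/-- `Q_{ij}(g,∂g) = -g(∇g_{ik}, ∇g^{kl}) g_{lj} + g(Hess x^k, Hess x^l) g_{ik} g_{lj}`,
where `g(∇u,∇v) = g^{ab} ∂_a u ∂_b v` and `(Hess x^k)_{ab} = -Γ^k_{ab}`. -/
def Qlow3 (Ω : Set E3) (G : Met3) (y : E3) (i j : Fin 3) : ℝ :=
  - (∑ k : Fin 3, ∑ l : Fin 3,
      (∑ a : Fin 3, ∑ b : Fin 3,
        (G y)⁻¹ a b * pd3 Ω a (fun z => G z i k) y * pd3 Ω b (fun z => (G z)⁻¹ k l) y)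
      * G y l j)
  + ∑ k : Fin 3, ∑ l : Fin 3,
      (∑ a : Fin 3, ∑ b : Fin 3, ∑ c : Fin 3, ∑ d : Fin 3,
        (G y)⁻¹ a c * (G y)⁻¹ b d * Γ3 Ω G y k a b * Γ3 Ω G y l c d)
      * G y i k * G y l j

/-- `Q^{ij} = g(Hess x^i, Hess x^j)`. -/
def Qup3 (Ω : Set E3) (G : Met3) (y : E3) (i j : Fin 3) : ℝ :=
  ∑ a : Fin 3, ∑ b : Fin 3, ∑ c : Fin 3, ∑ d : Fin 3,
    (G y)⁻¹ a c * (G y)⁻¹ b d * Γ3 Ω G y i a b * Γ3 Ω G y j c d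

/-- The 2-dimensional analogue `Q̸_{AB}(g̸, ∂̸g̸)`. -/
def Qlow2 (Ω : Set E2) (H : Met2) (z : E2) (A B : Fin 2) : ℝ :=
  - (∑ C : Fin 2, ∑ D : Fin 2,
      (∑ a : Fin 2, ∑ b : Fin 2,
        (H z)⁻¹ a b * pd2 Ω a (fun w => H w A C) z * pd2 Ω b (fun w => (H w)⁻¹ C D) z)
      * H z D B)
  + ∑ C : Fin 2, ∑ D : Fin 2,
      (∑ a : Fin 2, ∑ b : Fin 2, ∑ c : Fin 2, ∑ d : Fin 2,
        (H z)⁻¹ a c * (H z)⁻¹ b d * Γ2 Ω H z C a b * Γ2 Ω H z D c d)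
      * H z A C * H z D B

/-! ## Riemannian 3-manifolds with boundary, presented by half-ball coordinate atlases -/

/-- A coordinate chart of a 3-manifold with boundary: a map `φ : B⁺(x,r) → U ⊆ M` together
with the coordinate components `G` of the Riemannian metric in this chart. -/
structure MChart (M : Type) where
  ctr : E3
  rad : ℝ
  map : E3 → M
  dom : Set M
  G : Met3

namespace MChart
end MChart

/-- The inverse (coordinate) map of a chart. -/
def chartInv {M : Type} (c : MChart M) : M → E3 :=
  Function.invFunOn c.map (Bplus c.ctr c.rad)

/-- The part of `B⁺(x,r)` on which the transition to another chart is defined. -/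
def overlapSet {M : Type} (c c' : MChart M) : Set E3 :=
  {y | y ∈ Bplus c.ctr c.rad ∧ c.map y ∈ c'.dom}

/-- The transition map between two charts. -/
def transMap {M : Type} (c c' : MChart M) : E3 → E3 := fun y => chartInv c' (c.map y)

/-- Basic requirements on a chart: positive radius, center in `ℍ⁺`, homeomorphism onto an
open set `U`, the flat face `{x³ = 0}` corresponds exactly to the boundary of `M`, and the
metric components are symmetric and positive definite. -/
def ChartGood {M : Type} [TopologicalSpace M] (bdry : Set M) (c : MChart M) : Prop :=
  0 < c.rad ∧ 0 ≤ c.ctr 2 ∧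
  c.dom = c.map '' (Bplus c.ctr c.rad) ∧ IsOpen c.dom ∧
  Set.InjOn c.map (Bplus c.ctr c.rad) ∧ ContinuousOn c.map (Bplus c.ctr c.rad) ∧
  ContinuousOn (chartInv c) c.dom ∧
  (∀ y ∈ Bplus c.ctr c.rad, (y 2 = 0 ↔ c.map y ∈ bdry)) ∧
  (∀ y ∈ Bplus c.ctr c.rad, (c.G y).IsSymm ∧ (c.G y).PosDef)

/-- Compatibility of two charts with regularity `n`: the transition map is `C^n` on the
overlap, and the metric components of one chart are the pullback of those of the other. -/
def ChartTransC {M : Type} (n : ℕ∞) (c c' : MChart M) : Prop :=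
  (∀ a : Fin 3, ContDiffOn ℝ n (fun y => transMap c c' y a) (overlapSet c c')) ∧
  (∀ y ∈ overlapSet c c', ∀ i j : Fin 3,
    c.G y i j = ∑ a : Fin 3, ∑ b : Fin 3,
      fderivWithin ℝ (transMap c c') (overlapSet c c') y (e3 i) a *
      c'.G (transMap c c' y) a b *
      fderivWithin ℝ (transMap c c') (overlapSet c c') y (e3 j) b)

/-- A smooth Riemannian 3-manifold with boundary, presented by an atlas of half-ball charts
carrying the coordinate components of the Riemannian metric. -/
structure RiemannMfdBdry3 (M : Type) [TopologicalSpace M] : Type where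
  atlas : Set (MChart M)
  bdry : Set M
  good : ∀ c ∈ atlas, ChartGood bdry c
  compat : ∀ c ∈ atlas, ∀ c' ∈ atlas, ChartTransC (⊤ : ℕ∞) c c'
  cover : ∀ p : M, ∃ c ∈ atlas, p ∈ c.dom
  smooth : ∀ c ∈ atlas, ∀ i j : Fin 3,
    ContDiffOn ℝ (⊤ : ℕ∞) (fun y => c.G y i j) (Bplus c.ctr c.rad)

/-- A further chart (of regularity `n`) compatible with the smooth structure `R`. -/
def IsChartOfC {M : Type} [TopologicalSpace M] (R : RiemannMfdBdry3 M) (n : ℕ∞)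
    (c : MChart M) : Prop :=
  ChartGood R.bdry c ∧ ∀ c' ∈ R.atlas, ChartTransC n c c' ∧ ChartTransC n c' c

/-- An `H³`-regular chart compatible with `R`. -/
def H3ChartOf {M : Type} [TopologicalSpace M] (R : RiemannMfdBdry3 M) (c : MChart M) : Prop :=
  IsChartOfC R 1 c ∧ ∀ c' ∈ R.atlas, ∀ a : Fin 3,
    wNormNat3 2 3 (overlapSet c c') (fun y => transMap c c' y a) < ⊤ ∧
    wNormNat3 2 3 (overlapSet c' c) (fun y => transMap c' c y a) < ⊤

/-- A `C^{m+1,α}`-regular chart compatible with `R`. -/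
def CmaChartReg {M : Type} [TopologicalSpace M] (R : RiemannMfdBdry3 M) (m : ℕ) (α : ℝ)
    (c : MChart M) : Prop :=
  IsChartOfC R (m+1 : ℕ) c ∧ ∀ c' ∈ R.atlas, ∀ a : Fin 3,
    holderE α (overlapSet c c')
      (fun y => iteratedFDerivWithin ℝ (m+1) (fun z => transMap c c' z a) (overlapSet c c') y)
      < ⊤ ∧
    holderE α (overlapSet c' c)
      (fun y => iteratedFDerivWithin ℝ (m+1) (fun z => transMap c' c z a) (overlapSet c' c) y)
      < ⊤

open Classical in
/-- The `g`-speed of a path `γ` at time `t`, computed in any atlas chart around `γ t`. -/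
def speedAt {M : Type} [TopologicalSpace M] (R : RiemannMfdBdry3 M) (γ : ℝ → M) (t : ℝ) : ℝ :=
  if h : ∃ c ∈ R.atlas, γ t ∈ c.dom then
    Real.sqrt (∑ i : Fin 3, ∑ j : Fin 3,
      (deriv (fun s => chartInv h.choose (γ s)) t) i *
      h.choose.G (chartInv h.choose (γ t)) i j *
      (deriv (fun s => chartInv h.choose (γ s)) t) j)
  else 0

/-- The geodesic (Riemannian) distance: the infimum of the lengths of paths joining two
points. -/
def geodDist {M : Type} [TopologicalSpace M] (R : RiemannMfdBdry3 M) (p q : M) : ℝ :=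
  sInf {L | ∃ γ : ℝ → M, Continuous γ ∧ γ 0 = p ∧ γ 1 = q ∧
    L = ∫ t in (0:ℝ)..1, speedAt R γ t}

/-- The geodesic ball `B_g(p,ρ)`. -/
def Bgeo {M : Type} [TopologicalSpace M] (R : RiemannMfdBdry3 M) (p : M) (ρ : ℝ) : Set M :=
  {q | geodDist R p q < ρ}

/-- Completeness of `(M,g)` as a metric space (with the geodesic distance). -/
def GComplete {M : Type} [TopologicalSpace M] (R : RiemannMfdBdry3 M) : Prop :=
  ∀ u : ℕ → M,
    (∀ ε : ℝ, 0 < ε → ∃ N : ℕ, ∀ m ≥ N, ∀ n ≥ N, geodDist R (u m) (u n) < ε) →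
    ∃ p : M, Filter.Tendsto u Filter.atTop (nhds p)

/-- The integral `∫_A f dvol_g`, defined through countable chart covers (infimum over all
covers of the sum of the chart-wise coordinate integrals against `√det g`). -/
def intOn {M : Type} [TopologicalSpace M] (R : RiemannMfdBdry3 M) (A : Set M)
    (f : M → ℝ) : ℝ≥0∞ :=
  ⨅ (c : ℕ → MChart M) (S : ℕ → Set M)
    (_ : (∀ n, c n ∈ R.atlas ∧ S n ⊆ (c n).dom) ∧ A ⊆ ⋃ n, S n),
    ∑' n, ∫⁻ y in {y | y ∈ Bplus (c n).ctr (c n).rad ∧ (c n).map y ∈ S n ∩ A},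
      ENNReal.ofReal (f ((c n).map y) * Real.sqrt |((c n).G y).det|)

/-- The boundary integral `∫_{∂M} f dvol_{g̸}`, defined through countable chart covers. -/
def intBdry {M : Type} [TopologicalSpace M] (R : RiemannMfdBdry3 M) (f : M → ℝ) : ℝ≥0∞ :=
  ⨅ (c : ℕ → MChart M) (S : ℕ → Set M)
    (_ : (∀ n, c n ∈ R.atlas ∧ S n ⊆ (c n).dom) ∧ R.bdry ⊆ ⋃ n, S n),
    ∑' n, ∫⁻ z in {z : E2 | iota z ∈ Bplus (c n).ctr (c n).rad ∧
        (c n).map (iota z) ∈ S n ∩ R.bdry},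
      ENNReal.ofReal (f ((c n).map (iota z)) * Real.sqrt |(indMet (c n).G (iota z)).det|)

/-- The Riemannian volume of `A ⊆ M`. -/
def volM {M : Type} [TopologicalSpace M] (R : RiemannMfdBdry3 M) (A : Set M) : ℝ≥0∞ :=
  intOn R A (fun _ => 1)

/-- The volume radius of `(M,g)` at scale `1`:
`inf_{p ∈ M} inf_{ρ < 1} vol(B_g(p,ρ)) / ((4π/3) ρ³)`. -/
def rvol1 {M : Type} [TopologicalSpace M] (R : RiemannMfdBdry3 M) : ℝ :=
  sInf {v : ℝ | ∃ (p : M) (ρ : ℝ), 0 < ρ ∧ ρ < 1 ∧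
    v = (volM R (Bgeo R p ρ)).toReal / ((4 * Real.pi / 3) * ρ^3)}

/-- A chosen atlas chart around a point. -/
def chartAtP {M : Type} [TopologicalSpace M] (R : RiemannMfdBdry3 M) (p : M) : MChart M :=
  (R.cover p).choose

/-- The pointwise squared norm `|∇⁽ⁿ⁾Ric|²_g` at `p ∈ M`, computed in a chart around `p`. -/
def covRicSqAt {M : Type} [TopologicalSpace M] (R : RiemannMfdBdry3 M) (n : ℕ) (p : M) : ℝ :=
  tensNormSq (chartAtP R p).G (n+2)
    (covRic (Bplus (chartAtP R p).ctr (chartAtP R p).rad) (chartAtP R p).G n)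
    (chartInv (chartAtP R p) p)

/-- `‖∇⁽ⁿ⁾Ric‖_{L²(M)}`. -/
def covRicL2M {M : Type} [TopologicalSpace M] (R : RiemannMfdBdry3 M) (n : ℕ) : ℝ≥0∞ :=
  (intOn R Set.univ (covRicSqAt R n)) ^ (1/2 : ℝ)

/-- `‖Ric‖_{L²(M)}`. -/
def ricL2M {M : Type} [TopologicalSpace M] (R : RiemannMfdBdry3 M) : ℝ≥0∞ := covRicL2M R 0

/-- The pointwise squared norm `|Θ|²` of the second fundamental form at a boundary point. -/
def thetaSqAt {M : Type} [TopologicalSpace M] (R : RiemannMfdBdry3 M) (p : M) : ℝ :=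
  thetaSq (Bplus (chartAtP R p).ctr (chartAtP R p).rad) (chartAtP R p).G
    (chartInv (chartAtP R p) p)

/-- `‖Θ‖_{L⁴(∂M)}`. -/
def thetaL4M {M : Type} [TopologicalSpace M] (R : RiemannMfdBdry3 M) : ℝ≥0∞ :=
  (intBdry R (fun p => (thetaSqAt R p)^2)) ^ (1/4 : ℝ)

/-! ## Chart-wise metric bounds and the manifold norms -/

/-- The condition `a·e ≤ g ≤ b·e` (as quadratic forms) on `B⁺(x,r)`. -/
def MetricPinch (x : E3) (r : ℝ) (G : Met3) (a b : ℝ) : Prop :=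
  ∀ y ∈ Bplus x r, ∀ ξ : Fin 3 → ℝ,
    a * ∑ i : Fin 3, (ξ i)^2 ≤ (∑ i : Fin 3, ∑ j : Fin 3, G y i j * ξ i * ξ j) ∧
    (∑ i : Fin 3, ∑ j : Fin 3, G y i j * ξ i * ξ j) ≤ b * ∑ i : Fin 3, (ξ i)^2

/-- `‖∂g‖_{L²(B⁺(x,r))}` over all first coordinate derivatives of all components. -/
def d1Norm (x : E3) (r : ℝ) (G : Met3) : ℝ≥0∞ :=
  (∫⁻ y in Bplus x r, ENNReal.ofReal (∑ k : Fin 3, ∑ i : Fin 3, ∑ j : Fin 3,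
    (pd3 (Bplus x r) k (fun z => G z i j) y)^2)) ^ (1/2 : ℝ)

/-- `‖∂²g‖_{L²(B⁺(x,r))}` over all second coordinate derivatives of all components. -/
def d2Norm (x : E3) (r : ℝ) (G : Met3) : ℝ≥0∞ :=
  (∫⁻ y in Bplus x r, ENNReal.ofReal
    (∑ k : Fin 3, ∑ l : Fin 3, ∑ i : Fin 3, ∑ j : Fin 3,
      (pd3 (Bplus x r) k (pd3 (Bplus x r) l (fun z => G z i j)) y)^2)) ^ (1/2 : ℝ)

/-- Condition (h2): for all multi-indices `I` with `1 ≤ |I| ≤ 2`,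
`r^{|I|-3/2} ‖∂^I g_{ij}‖_{L²(B⁺(x,r))} ≤ Q`. -/
def H2CondLe (x : E3) (r : ℝ) (G : Met3) (Q : ℝ) : Prop :=
  (∀ (k i j : Fin 3),
    (ENNReal.ofReal r) ^ (-(1/2) : ℝ) *
      (∫⁻ y in Bplus x r,
        ENNReal.ofReal ((pd3 (Bplus x r) k (fun z => G z i j) y)^2)) ^ (1/2 : ℝ)
      ≤ ENNReal.ofReal Q) ∧
  (∀ (k l i j : Fin 3),
    (ENNReal.ofReal r) ^ ((1/2) : ℝ) *
      (∫⁻ y in Bplus x r,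
        ENNReal.ofReal
          ((pd3 (Bplus x r) k (pd3 (Bplus x r) l (fun z => G z i j)) y)^2)) ^ (1/2 : ℝ)
      ≤ ENNReal.ofReal Q)

/-- The chart-wise condition realizing `‖(M,g,p)‖^{b.h.}_{H²,r} ≤ Q`: an `H³`-regular
boundary harmonic chart `φ : B⁺(x,r) → U` with `φ(x) = p` satisfying (h1) and (h2). -/
def BHChartLe {M : Type} [TopologicalSpace M] (R : RiemannMfdBdry3 M) (p : M) (r Q : ℝ)
    (c : MChart M) : Prop :=
  H3ChartOf R c ∧ c.rad = r ∧ c.map c.ctr = p ∧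
  MetricPinch c.ctr r c.G (Real.exp (-(2*Q))) (Real.exp (2*Q)) ∧
  H2CondLe c.ctr r c.G Q ∧
  IsBdryHarmonic c.ctr r c.G

/-- `‖(M,g,p)‖^{b.h.}_{H²,r} ≤ Q`. -/
def BHNormLe {M : Type} [TopologicalSpace M] (R : RiemannMfdBdry3 M) (p : M)
    (r Q : ℝ) : Prop :=
  ∃ c : MChart M, BHChartLe R p r Q c

/-- The boundary harmonic `H²`-norm `‖(M,g,p)‖^{b.h.}_{H²,r}` (`∞` if no chart exists). -/
def bhNormPt {M : Type} [TopologicalSpace M] (R : RiemannMfdBdry3 M) (p : M) (r : ℝ) :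
    ℝ≥0∞ :=
  ⨅ (Q : ℝ≥0) (_ : BHNormLe R p r (Q : ℝ)), (Q : ℝ≥0∞)

/-- `‖(M,g)‖^{b.h.}_{H²,r} = sup_{p ∈ M} ‖(M,g,p)‖^{b.h.}_{H²,r}`. -/
def bhNorm {M : Type} [TopologicalSpace M] (R : RiemannMfdBdry3 M) (r : ℝ) : ℝ≥0∞ :=
  ⨆ p : M, bhNormPt R p r

/-- Condition (n2): for all multi-indices `I` with `0 ≤ |I| ≤ m`,
`r^{|I|+α} [∂^I g_{ij}]_{C^{0,α}(B⁺(x,r))} ≤ Q`. -/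
def CmaCondLe (m : ℕ) (α : ℝ) (x : E3) (r : ℝ) (G : Met3) (Q : ℝ) : Prop :=
  ∀ k : ℕ, k ≤ m → ∀ σ : Fin k → Fin 3, ∀ i j : Fin 3,
    ENNReal.ofReal (r ^ ((k : ℝ) + α)) *
      holderE α (Bplus x r) (iterPd3 (Bplus x r) k σ (fun z => G z i j))
    ≤ ENNReal.ofReal Q

/-- The chart-wise condition realizing `‖(M,g,p)‖_{C^{m,α},r} ≤ Q`. -/
def CmaChartLe {M : Type} [TopologicalSpace M] (R : RiemannMfdBdry3 M) (p : M) (m : ℕ)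
    (α r Q : ℝ) (c : MChart M) : Prop :=
  CmaChartReg R m α c ∧ c.rad = r ∧ c.map c.ctr = p ∧
  MetricPinch c.ctr r c.G (Real.exp (-(2*Q))) (Real.exp (2*Q)) ∧
  CmaCondLe m α c.ctr r c.G Q

/-- `‖(M,g,p)‖_{C^{m,α},r} ≤ Q`. -/
def CmaNormLe {M : Type} [TopologicalSpace M] (R : RiemannMfdBdry3 M) (p : M) (m : ℕ)
    (α r Q : ℝ) : Prop :=
  ∃ c : MChart M, CmaChartLe R p m α r Q c

/-- The norm `‖(M,g,p)‖_{C^{m,α},r}` (`∞` if no chart exists). -/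
def cmaNormPt {M : Type} [TopologicalSpace M] (R : RiemannMfdBdry3 M) (p : M) (m : ℕ)
    (α r : ℝ) : ℝ≥0∞ :=
  ⨅ (Q : ℝ≥0) (_ : CmaNormLe R p m α r (Q : ℝ)), (Q : ℝ≥0∞)

/-- `‖(M,g)‖_{C^{m,α},r} = sup_{p ∈ M} ‖(M,g,p)‖_{C^{m,α},r}`. -/
def cmaNorm {M : Type} [TopologicalSpace M] (R : RiemannMfdBdry3 M) (m : ℕ)
    (α r : ℝ) : ℝ≥0∞ :=
  ⨆ p : M, cmaNormPt R p m α r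

/-! ## Rescaling -/

/-- The chart of the rescaled manifold `(M, λ²g)` obtained from a chart of `(M,g)` by the
coordinate scaling `x ↦ λx` (so that the metric components satisfy `G'(y) = G(λ⁻¹y)`). -/
def MChart.scaleC {M : Type} (l : ℝ) (c : MChart M) : MChart M :=
  ⟨l • c.ctr, l * c.rad, fun y => c.map (l⁻¹ • y), c.dom, fun y => c.G (l⁻¹ • y)⟩

/-- `R'` is the presentation of the rescaled manifold `(M, λ²g)` (with charts rescaled by
`λ`), where `R` presents `(M,g)`. -/
def IsScalingOf {M : Type} [TopologicalSpace M] (l : ℝ) (R R' : RiemannMfdBdry3 M) : Prop :=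
  R'.bdry = R.bdry ∧ R'.atlas = (MChart.scaleC l) '' R.atlas

/-! ## Pointed manifolds and pointed convergence -/

/-- A pointed (smooth) Riemannian 3-manifold with boundary. -/
structure PointedRM3 : Type 1 where
  (carrier : Type)
  [topo : TopologicalSpace carrier]
  (str : RiemannMfdBdry3 carrier)
  (pt : carrier)

attribute [instance] PointedRM3.topo

open Classical in
/-- The components of the pullback `F*g'` of the metric of `(M',g')` under `F : M → M'`,
computed in a chart `c` of `M` (and some chart of `M'` around the image point). -/
def pullG {M M' : Type} [TopologicalSpace M'] (R' : RiemannMfdBdry3 M') (F : M → M')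
    (c : MChart M) (y : E3) (i j : Fin 3) : ℝ :=
  if h : ∃ c' ∈ R'.atlas, F (c.map y) ∈ c'.dom then
    ∑ a : Fin 3, ∑ b : Fin 3,
      fderiv ℝ (fun z => chartInv h.choose (F (c.map z))) y (e3 i) a *
      h.choose.G (chartInv h.choose (F (c.map y))) a b *
      fderiv ℝ (fun z => chartInv h.choose (F (c.map z))) y (e3 j) b
  else 0

/-- Pointed convergence of a sequence of pointed Riemannian manifolds with boundary,
in the topology measured by a chart-wise norm `normF` (e.g. `C^{m,β}` or `H²`):
for every `Rad > 0` there is a bounded set `Ω ⊇ B_g(p,Rad)` and embeddings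
`F_i : Ω → M_i` for large `i` with `F_i(p) = p_i`, `B_{g_i}(p_i,Rad) ⊆ F_i(Ω)` and
`(F_i)*g_i → g` on `Ω` in the given norm. -/
def PointedConvN (normF : Set E3 → (E3 → ℝ) → ℝ≥0∞) (Xi : ℕ → PointedRM3)
    (X : PointedRM3) : Prop :=
  ∀ Rad : ℝ, 0 < Rad →
  ∃ (Ω : Set X.carrier) (K : ℝ) (N : ℕ) (F : ∀ i, X.carrier → (Xi i).carrier),
    Ω ⊆ Bgeo X.str X.pt K ∧ Bgeo X.str X.pt Rad ⊆ Ω ∧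
    (∀ i, N ≤ i → Set.InjOn (F i) Ω ∧ ContinuousOn (F i) Ω ∧ F i X.pt = (Xi i).pt ∧
      Bgeo (Xi i).str (Xi i).pt Rad ⊆ F i '' Ω) ∧
    (∀ c ∈ X.str.atlas, ∀ i j : Fin 3,
      Filter.Tendsto
        (fun n => normF {y | y ∈ Bplus c.ctr c.rad ∧ c.map y ∈ Ω}
          (fun y => pullG (Xi n).str (F n) c y i j - c.G y i j))
        Filter.atTop (nhds 0))

/-- The chart-wise `H²` norm used for pointed `H²`-convergence. -/
def h2NormOn : Set E3 → (E3 → ℝ) → ℝ≥0∞ := fun S f => wNormNat3 2 2 S f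

/-! ## Outward unit normals of smooth domains -/

/-- `v` is tangent to `S` at `y`: it is the velocity of a curve in `S` through `y`. -/
def TangentTo (S : Set E3) (y v : E3) : Prop :=
  ∃ γ : ℝ → E3, γ 0 = y ∧ (∀ t, γ t ∈ S) ∧ HasDerivAt γ v 0

/-- `nvec` is the outward-pointing `g`-unit normal vector field along `∂Ω`. -/
def IsOutwardUnitNormal (Ω : Set E3) (G : Met3) (nvec : E3 → E3) : Prop :=
  ∀ y ∈ frontier Ω,
    (∑ i : Fin 3, ∑ j : Fin 3, G y i j * nvec y i * nvec y j) = 1 ∧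
    (∀ v : E3, TangentTo (frontier Ω) y v →
      (∑ i : Fin 3, ∑ j : Fin 3, G y i j * nvec y i * v j) = 0) ∧
    (∃ δ : ℝ, 0 < δ ∧ ∀ t : ℝ, 0 < t → t < δ → y + t • nvec y ∉ closure Ω)

/-! ### Auxiliary material for the proof of the Neumann relations -/

/-- Christoffel symbol built from inverse metric `h` and metric derivatives `dg`. -/
def nGam (h : Fin 3 → Fin 3 → ℝ) (dg : Fin 3 → Fin 3 → Fin 3 → ℝ) (k i j : Fin 3) : ℝ :=
  (1/2) * ∑ l, h k l * (dg i j l + dg j i l - dg l i j)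

lemma sum3split (f : Fin 3 → ℝ) : ∑ i, f i = (∑ A : Fin 2, f A.castSucc) + f 2 := by
  rw [Fin.sum_univ_castSucc]; rfl

lemma dcon (p q : Fin 3 → Fin 3 → ℝ) (v : Fin 3 → ℝ) (i : Fin 3)
    (hpq : ∀ m, (∑ a, p i a * q a m) = if i = m then 1 else 0) :
    ∑ a, ∑ m, p i a * q a m * v m = v i := by
  rw [Finset.sum_comm]
  rw [Finset.sum_congr rfl (fun m _ => by
    rw [← Finset.sum_mul, hpq m] :
      ∀ m ∈ Finset.univ, (∑ a, p i a * q a m * v m) = (if i = m then (1:ℝ) else 0) * v m)]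
  simp

section algebra

variable {g h : Fin 3 → Fin 3 → ℝ} {dg : Fin 3 → Fin 3 → Fin 3 → ℝ}

lemma nGam_symm (dgsym : ∀ k i j, dg k i j = dg k j i) (k i j : Fin 3) :
    nGam h dg k i j = nGam h dg k j i := by
  unfold nGam
  congr 1
  refine Finset.sum_congr rfl fun l _ => ?_
  rw [dgsym l i j]; ring

lemma gGam (hgh : ∀ i j, (∑ m, g i m * h m j) = if i = j then 1 else 0)
    (a k b : Fin 3) :
    ∑ m, g a m * nGam h dg m k b
      = (1/2) * (dg k b a + dg b k a - dg a k b) := by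
  have e1 : ∀ m ∈ Finset.univ, g a m * nGam h dg m k b
      = ∑ l, g a m * h m l * ((1/2) * (dg k b l + dg b k l - dg l k b)) := by
    intro m _
    unfold nGam
    rw [Finset.mul_sum, Finset.mul_sum]
    exact Finset.sum_congr rfl fun l _ => by ring
  rw [Finset.sum_congr rfl e1]
  exact dcon g h _ a (fun m => hgh a m)

lemma dg_eq (hgh : ∀ i j, (∑ m, g i m * h m j) = if i = j then 1 else 0)
    (dgsym : ∀ k i j, dg k i j = dg k j i) (k a b : Fin 3) :
    dg k a b = ∑ m, (g a m * nGam h dg m k b + g b m * nGam h dg m k a) := by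
  rw [Finset.sum_add_distrib, gGam hgh, gGam hgh]
  linarith [dgsym k a b]

lemma hhdg (hgh : ∀ i j, (∑ m, g i m * h m j) = if i = j then 1 else 0)
    (hhg : ∀ i j, (∑ m, h i m * g m j) = if i = j then 1 else 0)
    (hsym : ∀ i j, h i j = h j i)
    (dgsym : ∀ k i j, dg k i j = dg k j i) (k j : Fin 3) :
    ∑ a, ∑ b, h 2 a * dg k a b * h b j
      = (∑ b, h j b * nGam h dg 2 k b) + ∑ a, h 2 a * nGam h dg j k a := by
  have e1 : ∀ a ∈ Finset.univ, (∑ b, h 2 a * dg k a b * h b j)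
      = ∑ b, ((∑ m, h 2 a * g a m * (h j b * nGam h dg m k b))
            + ∑ m, h j b * g b m * (h 2 a * nGam h dg m k a)) := by
    intro a _
    refine Finset.sum_congr rfl fun b _ => ?_
    rw [dg_eq hgh dgsym k a b, Finset.mul_sum, Finset.sum_mul, ← Finset.sum_add_distrib]
    refine Finset.sum_congr rfl fun m _ => ?_
    rw [hsym j b]; ring
  rw [Finset.sum_congr rfl e1]
  have e2 : ∀ a ∈ Finset.univ, (∑ b, ((∑ m, h 2 a * g a m * (h j b * nGam h dg m k b))
            + ∑ m, h j b * g b m * (h 2 a * nGam h dg m k a)))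
      = (∑ b, ∑ m, h 2 a * g a m * (h j b * nGam h dg m k b))
        + h 2 a * nGam h dg j k a := by
    intro a _
    rw [Finset.sum_add_distrib]
    congr 1
    exact dcon h g _ j (fun m => hhg j m)
  rw [Finset.sum_congr rfl e2, Finset.sum_add_distrib]
  congr 1
  rw [Finset.sum_comm]
  exact Finset.sum_congr rfl fun b _ => dcon h g _ 2 (fun m => hhg 2 m)

variable {gi : Fin 2 → Fin 2 → ℝ}

lemma key_rel
    (hsym : ∀ i j, h i j = h j i)
    (h22 : h 2 2 ≠ 0)
    (hblock : ∀ A B : Fin 2, gi A B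
      = h A.castSucc B.castSucc - h 2 A.castSucc * h 2 B.castSucc / h 2 2)
    (A B C : Fin 2) :
    h 2 2 * nGam h dg A.castSucc B.castSucc C.castSucc
      - h 2 A.castSucc * nGam h dg 2 B.castSucc C.castSucc
    = h 2 2 * ((1/2) * ∑ D : Fin 2, gi A D *
        (dg B.castSucc C.castSucc D.castSucc + dg C.castSucc B.castSucc D.castSucc
          - dg D.castSucc B.castSucc C.castSucc)) := by
  unfold nGam
  simp only [Finset.mul_sum]
  rw [← Finset.sum_sub_distrib]
  rw [sum3split (fun l => h 2 2 * (1 / 2 * (h A.castSucc l *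
      (dg B.castSucc C.castSucc l + dg C.castSucc B.castSucc l - dg l B.castSucc C.castSucc)))
      - h 2 A.castSucc * (1 / 2 * (h 2 l *
      (dg B.castSucc C.castSucc l + dg C.castSucc B.castSucc l - dg l B.castSucc C.castSucc))))]
  rw [show h 2 2 * (1 / 2 * (h A.castSucc 2 *
      (dg B.castSucc C.castSucc 2 + dg C.castSucc B.castSucc 2 - dg 2 B.castSucc C.castSucc)))
      - h 2 A.castSucc * (1 / 2 * (h 2 2 *
      (dg B.castSucc C.castSucc 2 + dg C.castSucc B.castSucc 2 - dg 2 B.castSucc C.castSucc))) = 0 by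
    rw [hsym A.castSucc 2]; ring]
  rw [add_zero]
  refine Finset.sum_congr rfl fun D _ => ?_
  rw [hblock A D]
  field_simp

lemma nC1
    (hgh : ∀ i j, (∑ m, g i m * h m j) = if i = j then 1 else 0)
    (hhg : ∀ i j, (∑ m, h i m * g m j) = if i = j then 1 else 0)
    (hsym : ∀ i j, h i j = h j i)
    (dgsym : ∀ k i j, dg k i j = dg k j i)
    (dh : Fin 3 → Fin 3 → Fin 3 → ℝ)
    (hdh : ∀ k i j, dh k i j = -∑ a, ∑ b, h i a * dg k a b * h b j)
    (h22 : h 2 2 ≠ 0)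
    (hblock : ∀ A B : Fin 2, gi A B
      = h A.castSucc B.castSucc - h 2 A.castSucc * h 2 B.castSucc / h 2 2)
    (hharm : ∑ i, ∑ j, h i j * nGam h dg 2 i j = 0) :
    ∑ k, h 2 k * dh k 2 2
      = 2 * (∑ A : Fin 2, ∑ B : Fin 2, gi A B *
          nGam h dg 2 A.castSucc B.castSucc) * h 2 2 := by
  have dh22 : ∀ k, dh k 2 2 = -2 * ∑ b, h 2 b * nGam h dg 2 k b := by
    intro k
    rw [hdh, hhdg hgh hhg hsym dgsym k 2]
    ring
  -- replace dh in the goal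
  have e1 : ∑ k, h 2 k * dh k 2 2
      = ∑ k, ∑ b, (-2) * (h 2 k * (h 2 b * nGam h dg 2 k b)) := by
    refine Finset.sum_congr rfl fun k _ => ?_
    rw [dh22 k, Finset.mul_sum, Finset.mul_sum]
    exact Finset.sum_congr rfl fun b _ => by ring
  rw [e1]
  -- name the atoms
  have ns1 : nGam h dg 2 0 2 = nGam h dg 2 2 0 := nGam_symm dgsym 2 0 2
  have ns2 : nGam h dg 2 1 2 = nGam h dg 2 2 1 := nGam_symm dgsym 2 1 2
  have hs1 : h 0 2 = h 2 0 := hsym 0 2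
  have hs2 : h 1 2 = h 2 1 := hsym 1 2
  have hH : (∑ A : Fin 2, ∑ B : Fin 2, h A.castSucc B.castSucc *
        nGam h dg 2 A.castSucc B.castSucc)
      + (∑ B : Fin 2, h 2 B.castSucc * nGam h dg 2 2 B.castSucc)
      + (∑ B : Fin 2, h 2 B.castSucc * nGam h dg 2 2 B.castSucc)
      + h 2 2 * nGam h dg 2 2 2 = 0 := by
    simp only [Fin.sum_univ_three, Fin.sum_univ_two, Fin.castSucc_zero,
      Fin.castSucc_one] at hharm ⊢
    linear_combination hharm - nGam h dg 2 0 2 * hs1 - nGam h dg 2 1 2 * hs2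
      - h 2 0 * ns1 - h 2 1 * ns2
  have hT : ∑ k, ∑ b, (-2) * (h 2 k * (h 2 b * nGam h dg 2 k b))
      = (-2) * ((∑ A : Fin 2, ∑ B : Fin 2, h 2 A.castSucc * h 2 B.castSucc *
          nGam h dg 2 A.castSucc B.castSucc)
        + h 2 2 * (∑ B : Fin 2, h 2 B.castSucc * nGam h dg 2 2 B.castSucc)
        + h 2 2 * (∑ B : Fin 2, h 2 B.castSucc * nGam h dg 2 2 B.castSucc)
        + h 2 2 * (h 2 2 * nGam h dg 2 2 2)) := by
    simp only [Fin.sum_univ_three, Fin.sum_univ_two, Fin.castSucc_zero,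
      Fin.castSucc_one]
    linear_combination (-2 * h 2 0 * h 2 2) * ns1 + (-2 * h 2 1 * h 2 2) * ns2
  have hGsum : (∑ A : Fin 2, ∑ B : Fin 2, gi A B * nGam h dg 2 A.castSucc B.castSucc)
      = (∑ A : Fin 2, ∑ B : Fin 2, h A.castSucc B.castSucc *
          nGam h dg 2 A.castSucc B.castSucc)
        - (∑ A : Fin 2, ∑ B : Fin 2, h 2 A.castSucc * h 2 B.castSucc *
          nGam h dg 2 A.castSucc B.castSucc) / h 2 2 := by
    simp only [Fin.sum_univ_two, hblock]
    field_simp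
    ring
  rw [hT, hGsum]
  set P := ∑ A : Fin 2, ∑ B : Fin 2, h A.castSucc B.castSucc *
      nGam h dg 2 A.castSucc B.castSucc with hP
  set U := ∑ A : Fin 2, ∑ B : Fin 2, h 2 A.castSucc * h 2 B.castSucc *
      nGam h dg 2 A.castSucc B.castSucc with hU
  set Q := ∑ B : Fin 2, h 2 B.castSucc * nGam h dg 2 2 B.castSucc with hQ
  set R := nGam h dg 2 2 2 with hR
  have hPv : P = -Q - Q - h 2 2 * R := by linarith
  rw [hPv]
  field_simp
  ring

lemma nC2
    (hgh : ∀ i j, (∑ m, g i m * h m j) = if i = j then 1 else 0)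
    (hhg : ∀ i j, (∑ m, h i m * g m j) = if i = j then 1 else 0)
    (hsym : ∀ i j, h i j = h j i)
    (dgsym : ∀ k i j, dg k i j = dg k j i)
    (dh : Fin 3 → Fin 3 → Fin 3 → ℝ)
    (hdh : ∀ k i j, dh k i j = -∑ a, ∑ b, h i a * dg k a b * h b j)
    (h22 : h 2 2 ≠ 0)
    (hblock : ∀ A B : Fin 2, gi A B
      = h A.castSucc B.castSucc - h 2 A.castSucc * h 2 B.castSucc / h 2 2)
    (A : Fin 2)
    (hharmA : ∑ i, ∑ j, h i j * nGam h dg A.castSucc i j = 0)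
    (hharm2A : ∑ B : Fin 2, ∑ C : Fin 2, gi B C * ((1/2) * ∑ D : Fin 2, gi A D *
        (dg B.castSucc C.castSucc D.castSucc + dg C.castSucc B.castSucc D.castSucc
          - dg D.castSucc B.castSucc C.castSucc)) = 0) :
    ∑ k, h 2 k * dh k 2 A.castSucc
      = (∑ B : Fin 2, ∑ C : Fin 2, gi B C * nGam h dg 2 B.castSucc C.castSucc)
          * h 2 A.castSucc
        + (1/2) * ∑ m, h A.castSucc m * dh m 2 2 := by
  have dh22 : ∀ k, dh k 2 2 = -2 * ∑ b, h 2 b * nGam h dg 2 k b := by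
    intro k
    rw [hdh, hhdg hgh hhg hsym dgsym k 2]
    ring
  have dh2A : ∀ k, dh k 2 A.castSucc
      = -((∑ b, h A.castSucc b * nGam h dg 2 k b)
        + ∑ a, h 2 a * nGam h dg A.castSucc k a) := by
    intro k
    rw [hdh, hhdg hgh hhg hsym dgsym k A.castSucc]
  have e0 : ∀ k ∈ Finset.univ, h 2 k * dh k 2 A.castSucc
      = -(∑ b, h 2 k * (h A.castSucc b * nGam h dg 2 k b))
        - ∑ a, h 2 k * (h 2 a * nGam h dg A.castSucc k a) := by
    intro k _
    rw [dh2A k, mul_neg, mul_add, Finset.mul_sum, Finset.mul_sum, neg_add]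
    ring
  rw [Finset.sum_congr rfl e0, Finset.sum_sub_distrib, Finset.sum_neg_distrib]
  -- the first double sum equals its transposed version
  have hT1 : ∑ k, ∑ b, h 2 k * (h A.castSucc b * nGam h dg 2 k b)
      = ∑ m, ∑ b, h A.castSucc m * (h 2 b * nGam h dg 2 m b) := by
    rw [Finset.sum_comm]
    refine Finset.sum_congr rfl fun b _ => Finset.sum_congr rfl fun k _ => ?_
    rw [nGam_symm dgsym 2 k b]
    ring
  have hRHS2 : (1/2) * ∑ m, h A.castSucc m * dh m 2 2
      = -(∑ m, ∑ b, h A.castSucc m * (h 2 b * nGam h dg 2 m b)) := by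
    have e2 : ∀ m ∈ Finset.univ, h A.castSucc m * dh m 2 2
        = ∑ b, (-2) * (h A.castSucc m * (h 2 b * nGam h dg 2 m b)) := by
      intro m _
      rw [dh22 m, Finset.mul_sum, Finset.mul_sum]
      exact Finset.sum_congr rfl fun b _ => by ring
    rw [Finset.sum_congr rfl e2]
    simp only [← Finset.mul_sum]
    ring
  have nsA1 : nGam h dg A.castSucc 0 2 = nGam h dg A.castSucc 2 0 :=
    nGam_symm dgsym A.castSucc 0 2
  have nsA2 : nGam h dg A.castSucc 1 2 = nGam h dg A.castSucc 2 1 :=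
    nGam_symm dgsym A.castSucc 1 2
  have hs1 : h 0 2 = h 2 0 := hsym 0 2
  have hs2 : h 1 2 = h 2 1 := hsym 1 2
  have hH2 : (∑ B : Fin 2, ∑ C : Fin 2, h B.castSucc C.castSucc *
        nGam h dg A.castSucc B.castSucc C.castSucc)
      + (∑ C : Fin 2, h 2 C.castSucc * nGam h dg A.castSucc 2 C.castSucc)
      + (∑ C : Fin 2, h 2 C.castSucc * nGam h dg A.castSucc 2 C.castSucc)
      + h 2 2 * nGam h dg A.castSucc 2 2 = 0 := by
    simp only [Fin.sum_univ_three, Fin.sum_univ_two, Fin.castSucc_zero,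
      Fin.castSucc_one] at hharmA ⊢
    linear_combination hharmA - nGam h dg A.castSucc 0 2 * hs1
      - nGam h dg A.castSucc 1 2 * hs2 - h 2 0 * nsA1 - h 2 1 * nsA2
  have hT2 : ∑ k, ∑ a, h 2 k * (h 2 a * nGam h dg A.castSucc k a)
      = (∑ B : Fin 2, ∑ C : Fin 2, h 2 B.castSucc * h 2 C.castSucc *
          nGam h dg A.castSucc B.castSucc C.castSucc)
        + h 2 2 * (∑ C : Fin 2, h 2 C.castSucc * nGam h dg A.castSucc 2 C.castSucc)
        + h 2 2 * (∑ C : Fin 2, h 2 C.castSucc * nGam h dg A.castSucc 2 C.castSucc)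
        + h 2 2 * (h 2 2 * nGam h dg A.castSucc 2 2) := by
    simp only [Fin.sum_univ_three, Fin.sum_univ_two, Fin.castSucc_zero,
      Fin.castSucc_one]
    linear_combination (h 2 0 * h 2 2) * nsA1 + (h 2 1 * h 2 2) * nsA2
  have hBS : h 2 2 * (∑ B : Fin 2, ∑ C : Fin 2, h B.castSucc C.castSucc *
        nGam h dg A.castSucc B.castSucc C.castSucc)
      - (∑ B : Fin 2, ∑ C : Fin 2, h 2 B.castSucc * h 2 C.castSucc *
          nGam h dg A.castSucc B.castSucc C.castSucc)
      = h 2 2 * ∑ B : Fin 2, ∑ C : Fin 2, gi B C *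
          nGam h dg A.castSucc B.castSucc C.castSucc := by
    simp only [Fin.sum_univ_two, hblock]
    field_simp
    ring
  have hKS : h 2 2 * (∑ B : Fin 2, ∑ C : Fin 2, gi B C *
        nGam h dg A.castSucc B.castSucc C.castSucc)
      - (∑ B : Fin 2, ∑ C : Fin 2, gi B C * nGam h dg 2 B.castSucc C.castSucc)
        * h 2 A.castSucc = 0 := by
    have expand : h 2 2 * (∑ B : Fin 2, ∑ C : Fin 2, gi B C *
          nGam h dg A.castSucc B.castSucc C.castSucc)
        - (∑ B : Fin 2, ∑ C : Fin 2, gi B C * nGam h dg 2 B.castSucc C.castSucc)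
          * h 2 A.castSucc
        = ∑ B : Fin 2, ∑ C : Fin 2, gi B C *
            (h 2 2 * nGam h dg A.castSucc B.castSucc C.castSucc
              - h 2 A.castSucc * nGam h dg 2 B.castSucc C.castSucc) := by
      simp only [Finset.mul_sum, Finset.sum_mul, ← Finset.sum_sub_distrib]
      exact Finset.sum_congr rfl fun B _ => Finset.sum_congr rfl fun C _ => by ring
    rw [expand]
    have per : ∀ B ∈ Finset.univ, ∀ C ∈ Finset.univ, gi B C *
          (h 2 2 * nGam h dg A.castSucc B.castSucc C.castSucc
            - h 2 A.castSucc * nGam h dg 2 B.castSucc C.castSucc)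
        = h 2 2 * (gi B C * ((1/2) * ∑ D : Fin 2, gi A D *
            (dg B.castSucc C.castSucc D.castSucc + dg C.castSucc B.castSucc D.castSucc
              - dg D.castSucc B.castSucc C.castSucc))) := by
      intro B _ C _
      rw [key_rel hsym h22 hblock A B C]
      ring
    rw [Finset.sum_congr rfl fun B hB =>
      Finset.sum_congr rfl fun C hC => per B hB C hC]
    simp only [← Finset.mul_sum]
    rw [hharm2A, mul_zero]
  rw [hT1, hRHS2, hT2]
  linear_combination (-(h 2 2)) * hH2 + hBS + hKS



section NeumannAnalytic

/-- `iota` as a continuous linear map. -/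
def iotaL : E2 →L[ℝ] E3 :=
  ((EuclideanSpace.proj (0 : Fin 2)).smulRight (e3 0))
    + ((EuclideanSpace.proj (1 : Fin 2)).smulRight (e3 1))

lemma iotaL_apply (z : E2) : iotaL z = iota z := rfl

lemma iota_two (z : E2) : iota z 2 = 0 := by
  simp [iota, e3, EuclideanSpace.single_apply]

lemma iota_e2 (A : Fin 2) : iota (e2 A) = e3 (emb23 A) := by
  fin_cases A <;>
    · simp only [iota, e2, emb23]
      ext i
      simp [e3, EuclideanSpace.single_apply]

lemma mem_bot2_iff (x : E3) (r : ℝ) (z : E2) :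
    z ∈ bot2 x r ↔ iota z ∈ Metric.ball x r := by
  simp [bot2, BplusBot, Bplus, upperHalf3, iota_two]

lemma isOpen_bot2 (x : E3) (r : ℝ) : IsOpen (bot2 x r) := by
  have : bot2 x r = iotaL ⁻¹' (Metric.ball x r) := by
    ext z
    rw [mem_bot2_iff]
    simp [iotaL_apply]
  rw [this]
  exact Metric.isOpen_ball.preimage iotaL.continuous

lemma convex_Bplus (x : E3) (r : ℝ) : Convex ℝ (Bplus x r) := by
  refine (convex_ball x r).inter ?_
  intro u hu v hv a b ha hb hab
  have : (a • u + b • v) 2 = a * u 2 + b * v 2 := by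
    simp [PiLp.add_apply, PiLp.smul_apply, smul_eq_mul]
  simp only [upperHalf3, Set.mem_setOf_eq] at hu hv ⊢
  rw [this]
  positivity

lemma uniqueDiffOn_Bplus {x : E3} {r : ℝ} {z : E2} (hz : z ∈ bot2 x r) :
    UniqueDiffOn ℝ (Bplus x r) := by
  have hy : iota z ∈ Metric.ball x r := (mem_bot2_iff x r z).1 hz
  set y := iota z
  set ε : ℝ := (r - dist y x) / 2 with hε
  have hd : dist y x < r := Metric.mem_ball.1 hy
  have hεpos : 0 < ε := by rw [hε]; linarith
  refine uniqueDiffOn_convex (convex_Bplus x r) ⟨y + ε • e3 2, ?_⟩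
  have hsub : Metric.ball x r ∩ {v : E3 | 0 < v 2} ⊆ interior (Bplus x r) := by
    refine interior_maximal ?_ (Metric.isOpen_ball.inter ?_)
    · intro v hv
      have h2 : (0:ℝ) < v 2 := hv.2
      exact ⟨hv.1, le_of_lt h2⟩
    · have : {v : E3 | 0 < v 2} = (fun v : E3 => v 2) ⁻¹' Set.Ioi 0 := rfl
      rw [this]
      exact isOpen_Ioi.preimage (EuclideanSpace.proj (2 : Fin 3)).continuous
  apply hsub
  constructor
  · have h1 : dist (y + ε • e3 2) y = ε := by
      rw [dist_eq_norm, add_sub_cancel_left, norm_smul, e3, EuclideanSpace.norm_single]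
      simp [abs_of_pos hεpos]
    calc dist (y + ε • e3 2) x ≤ dist (y + ε • e3 2) y + dist y x := dist_triangle _ _ _
    _ = ε + dist y x := by rw [h1]
    _ < r := by rw [hε]; linarith
  · have : (y + ε • e3 2) 2 = y 2 + ε * e3 2 2 := by
      simp [PiLp.add_apply, PiLp.smul_apply, smul_eq_mul]
    simp only [Set.mem_setOf_eq, this]
    have hy2 : y 2 = 0 := iota_two z
    have he : e3 2 2 = (1:ℝ) := by simp [e3, EuclideanSpace.single_apply]
    rw [hy2, he]
    linarith

lemma posdef_diag {M : Matrix (Fin 3) (Fin 3) ℝ} (h : M.PosDef) (i : Fin 3) :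
    0 < M i i := by
  have hx : (Pi.single i 1 : Fin 3 → ℝ) ≠ 0 := by
    intro hc
    have := congrFun hc i
    simp [Pi.single_eq_same] at this
  have := h.dotProduct_mulVec_pos hx
  simpa [dotProduct, Matrix.mulVec, Pi.single_apply, Finset.sum_ite_eq,
    Finset.mul_sum, mul_ite] using this

lemma detUnit {M : Matrix (Fin 3) (Fin 3) ℝ} (h : M.PosDef) : IsUnit M.det :=
  isUnit_iff_ne_zero.2 (ne_of_gt h.det_pos)

lemma mulInv_entries {M : Matrix (Fin 3) (Fin 3) ℝ} (h : M.PosDef) (i j : Fin 3) :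
    ∑ m, M i m * M⁻¹ m j = if i = j then 1 else 0 := by
  have h1 : M * M⁻¹ = 1 := Matrix.mul_nonsing_inv _ (detUnit h)
  have h2 : (M * M⁻¹) i j = (1 : Matrix (Fin 3) (Fin 3) ℝ) i j := by rw [h1]
  rw [Matrix.mul_apply, Matrix.one_apply] at h2
  exact h2

lemma invMul_entries {M : Matrix (Fin 3) (Fin 3) ℝ} (h : M.PosDef) (i j : Fin 3) :
    ∑ m, M⁻¹ i m * M m j = if i = j then 1 else 0 := by
  have h1 : M⁻¹ * M = 1 := Matrix.nonsing_inv_mul _ (detUnit h)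
  have h2 : (M⁻¹ * M) i j = (1 : Matrix (Fin 3) (Fin 3) ℝ) i j := by rw [h1]
  rw [Matrix.mul_apply, Matrix.one_apply] at h2
  exact h2

lemma inv_symm_entries {M : Matrix (Fin 3) (Fin 3) ℝ} (hs : M.IsSymm) (i j : Fin 3) :
    M⁻¹ i j = M⁻¹ j i := by
  have h1 : (M⁻¹).transpose = M⁻¹ := by
    rw [Matrix.transpose_nonsing_inv, hs]
  conv_lhs => rw [← h1]
  rw [Matrix.transpose_apply]

lemma emb23_ne_two (A : Fin 2) : emb23 A ≠ 2 := by
  fin_cases A <;> simp [emb23]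

lemma block_formula {M : Matrix (Fin 3) (Fin 3) ℝ} (hs : M.IsSymm) (hp : M.PosDef)
    (A B : Fin 2) :
    (Matrix.of fun A B : Fin 2 => M (emb23 A) (emb23 B))⁻¹ A B
      = M⁻¹ (emb23 A) (emb23 B)
        - M⁻¹ 2 (emb23 A) * M⁻¹ 2 (emb23 B) / M⁻¹ 2 2 := by
  have h22 : 0 < M⁻¹ 2 2 := posdef_diag hp.inv 2
  have key : (Matrix.of fun A B : Fin 2 => M (emb23 A) (emb23 B)) *
      (Matrix.of fun A B : Fin 2 => M⁻¹ (emb23 A) (emb23 B)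
        - M⁻¹ 2 (emb23 A) * M⁻¹ 2 (emb23 B) / M⁻¹ 2 2) = 1 := by
    ext A B
    rw [Matrix.mul_apply, Matrix.one_apply]
    have e1 := mulInv_entries hp (emb23 A) (emb23 B)
    have e2 := mulInv_entries hp (emb23 A) 2
    rw [Fin.sum_univ_three] at e1 e2
    rw [if_neg (emb23_ne_two A)] at e2
    rw [show ((if emb23 A = emb23 B then 1 else 0) : ℝ) = if A = B then 1 else 0 by
      simp [emb23, Fin.castSucc_inj]] at e1
    rw [Fin.sum_univ_two]
    simp only [Matrix.of_apply, emb23, Fin.castSucc_zero, Fin.castSucc_one] at e1 e2 ⊢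
    have s0 : M⁻¹ (0:Fin 3) 2 = M⁻¹ 2 0 := inv_symm_entries hs 0 2
    have s1 : M⁻¹ (1:Fin 3) 2 = M⁻¹ 2 1 := inv_symm_entries hs 1 2
    have s2 : M⁻¹ A.castSucc 2 = M⁻¹ 2 A.castSucc := inv_symm_entries hs A.castSucc 2
    have sB0 : M⁻¹ (0:Fin 3) B.castSucc = M⁻¹ B.castSucc 0 := inv_symm_entries hs 0 B.castSucc
    set W : Matrix (Fin 3) (Fin 3) ℝ := M⁻¹ with hW
    have hW22 : W 2 2 ≠ 0 := ne_of_gt h22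
    field_simp
    have hite : (W 2 2 * if A = B then (1:ℝ) else 0) = if A = B then W 2 2 else 0 := by
      split_ifs <;> ring
    linear_combination (W 2 2) * e1 - (W 2 B.castSucc) * e2
      + (M A.castSucc 0 * W 2 B.castSucc) * s0 + (M A.castSucc 1 * W 2 B.castSucc) * s1
  have h3 := Matrix.inv_eq_right_inv key
  rw [h3]
  rfl

/-! #### `pd3` calculus -/

lemma pd3_sum {Ω : Set E3} {y : E3} (hu : UniqueDiffWithinAt ℝ Ω y) (k : Fin 3)
    (f : Fin 3 → E3 → ℝ) (hf : ∀ m, DifferentiableWithinAt ℝ (f m) Ω y) :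
    pd3 Ω k (fun w => ∑ m, f m w) y = ∑ m, pd3 Ω k (f m) y := by
  unfold pd3
  rw [fderivWithin_fun_sum hu (fun m _ => hf m)]
  rw [ContinuousLinearMap.sum_apply]

lemma pd3_mul {Ω : Set E3} {y : E3} (hu : UniqueDiffWithinAt ℝ Ω y) (k : Fin 3)
    {a b : E3 → ℝ} (ha : DifferentiableWithinAt ℝ a Ω y)
    (hb : DifferentiableWithinAt ℝ b Ω y) :
    pd3 Ω k (fun w => a w * b w) y = pd3 Ω k a y * b y + a y * pd3 Ω k b y := by
  unfold pd3
  rw [fderivWithin_fun_mul hu ha hb]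
  simp only [ContinuousLinearMap.add_apply, ContinuousLinearMap.coe_smul',
    Pi.smul_apply, smul_eq_mul]
  ring

lemma pd3_congr {Ω : Set E3} {y : E3} (k : Fin 3) {f g : E3 → ℝ}
    (h : Set.EqOn f g Ω) (hy : y ∈ Ω) : pd3 Ω k f y = pd3 Ω k g y := by
  unfold pd3
  rw [fderivWithin_congr h (h hy)]

lemma pd3_const {Ω : Set E3} {y : E3} (hu : UniqueDiffWithinAt ℝ Ω y) (k : Fin 3)
    (c : ℝ) : pd3 Ω k (fun _ => c) y = 0 := by
  unfold pd3
  rw [fderivWithin_const_apply c]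
  rfl

/-! #### Differentiability of the metric, its determinant, adjugate and inverse -/

section Gdiff

variable {x : E3} {r : ℝ} {G : Met3}

lemma dwaG (hG : IsRiemOnBplus x r G) (i j : Fin 3) {w : E3} (hw : w ∈ Bplus x r) :
    DifferentiableWithinAt ℝ (fun w => G w i j) (Bplus x r) w :=
  ((hG.2 i j).differentiableOn (by simp)) w hw

lemma dwaDet (hG : IsRiemOnBplus x r G) {w : E3} (hw : w ∈ Bplus x r) :
    DifferentiableWithinAt ℝ (fun w => (G w).det) (Bplus x r) w := by
  have hrw : (fun w => (G w).det)
      = fun w => G w 0 0 * G w 1 1 * G w 2 2 - G w 0 0 * G w 1 2 * G w 2 1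
        - G w 0 1 * G w 1 0 * G w 2 2 + G w 0 1 * G w 1 2 * G w 2 0
        + G w 0 2 * G w 1 0 * G w 2 1 - G w 0 2 * G w 1 1 * G w 2 0 :=
    funext fun w => Matrix.det_fin_three (G w)
  rw [hrw]
  have D := fun i j => dwaG hG i j hw
  exact (((((((D 0 0).mul (D 1 1)).mul (D 2 2)).sub
    (((D 0 0).mul (D 1 2)).mul (D 2 1))).sub
    (((D 0 1).mul (D 1 0)).mul (D 2 2))).add
    (((D 0 1).mul (D 1 2)).mul (D 2 0))).add
    (((D 0 2).mul (D 1 0)).mul (D 2 1))).sub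
    (((D 0 2).mul (D 1 1)).mul (D 2 0))

lemma dwaAdj (hG : IsRiemOnBplus x r G) (i j : Fin 3) {w : E3} (hw : w ∈ Bplus x r) :
    DifferentiableWithinAt ℝ (fun w => (G w).adjugate i j) (Bplus x r) w := by
  have D := fun i j => dwaG hG i j hw
  have q1 : ∀ a b c d e f p q : Fin 3, DifferentiableWithinAt ℝ
      (fun w => G w a b * G w c d - G w e f * G w p q) (Bplus x r) w :=
    fun a b c d e f p q => ((D a b).mul (D c d)).sub ((D e f).mul (D p q))
  have q2 : ∀ a b c d e f p q : Fin 3, DifferentiableWithinAt ℝ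
      (fun w => -(G w a b * G w c d) + G w e f * G w p q) (Bplus x r) w :=
    fun a b c d e f p q => (((D a b).mul (D c d)).neg).add ((D e f).mul (D p q))
  simp only [Matrix.adjugate_fin_three]
  fin_cases i <;> fin_cases j <;>
    simp only [Matrix.cons_val', Matrix.cons_val_zero, Matrix.cons_val_one,
      Matrix.head_cons, Matrix.head_fin_const, Matrix.empty_val',
      Matrix.cons_val_fin_one, Matrix.of_apply, Fin.isValue] <;>
    first
      | exact q1 _ _ _ _ _ _ _ _
      | exact q2 _ _ _ _ _ _ _ _

lemma detG_ne (hG : IsRiemOnBplus x r G) {w : E3} (hw : w ∈ Bplus x r) :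
    (G w).det ≠ 0 := ne_of_gt (hG.1 w hw).2.det_pos

lemma dwaInv (hG : IsRiemOnBplus x r G) (i j : Fin 3) {w : E3} (hw : w ∈ Bplus x r) :
    DifferentiableWithinAt ℝ (fun w => (G w)⁻¹ i j) (Bplus x r) w := by
  have hrw : (fun w => (G w)⁻¹ i j)
      = fun w => ((G w).det)⁻¹ * (G w).adjugate i j := by
    funext w
    rw [Matrix.inv_def]
    simp [Ring.inverse_eq_inv', smul_eq_mul]
  rw [hrw]
  exact ((dwaDet hG hw).inv (detG_ne hG hw)).mul (dwaAdj hG i j hw)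

end Gdiff

section Gderiv

variable {x : E3} {r : ℝ} {G : Met3}

lemma pd3_G_symm (hG : IsRiemOnBplus x r G) {y : E3} (hy : y ∈ Bplus x r)
    (k i j : Fin 3) :
    pd3 (Bplus x r) k (fun w => G w i j) y = pd3 (Bplus x r) k (fun w => G w j i) y :=
  pd3_congr k (fun w hw => (hG.1 w hw).1.apply j i) hy

lemma pd3_inv_formula (hG : IsRiemOnBplus x r G) {y : E3} (hy : y ∈ Bplus x r)
    (hu : UniqueDiffWithinAt ℝ (Bplus x r) y) (k i l : Fin 3) :
    pd3 (Bplus x r) k (fun w => (G w)⁻¹ i l) y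
      = -∑ a, ∑ b, (G y)⁻¹ i a * pd3 (Bplus x r) k (fun w => G w a b) y
          * (G y)⁻¹ b l := by
  have star : ∀ j, ∑ m, (pd3 (Bplus x r) k (fun w => G w j m) y * (G y)⁻¹ m l
      + G y j m * pd3 (Bplus x r) k (fun w => (G w)⁻¹ m l) y) = 0 := by
    intro j
    have hsum : pd3 (Bplus x r) k (fun w => ∑ m, G w j m * (G w)⁻¹ m l) y = 0 := by
      rw [pd3_congr k (g := fun _ => if j = l then (1:ℝ) else 0)
        (fun w hw => mulInv_entries (hG.1 w hw).2 j l) hy, pd3_const hu]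
    rw [pd3_sum hu k (fun m w => G w j m * (G w)⁻¹ m l) (fun m => (dwaG hG j m hy).mul (dwaInv hG m l hy)),
      Finset.sum_congr rfl
        (fun m _ => pd3_mul hu k (dwaG hG j m hy) (dwaInv hG m l hy))] at hsum
    exact hsum
  have star' : ∀ j, ∑ m, G y j m * pd3 (Bplus x r) k (fun w => (G w)⁻¹ m l) y
      = -∑ m, pd3 (Bplus x r) k (fun w => G w j m) y * (G y)⁻¹ m l := by
    intro j
    have h4 := star j
    rw [Finset.sum_add_distrib] at h4
    linarith
  have e := dcon (fun i j => (G y)⁻¹ i j) (fun i j => G y i j)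
      (fun m => pd3 (Bplus x r) k (fun w => (G w)⁻¹ m l) y) i
      (fun m => invMul_entries (hG.1 y hy).2 i m)
  have e' : ∑ a, ∑ m, (G y)⁻¹ i a * G y a m *
        pd3 (Bplus x r) k (fun w => (G w)⁻¹ m l) y
      = pd3 (Bplus x r) k (fun w => (G w)⁻¹ i l) y := e
  rw [← e']
  have e2 : ∀ j ∈ (Finset.univ : Finset (Fin 3)), ∑ m, (G y)⁻¹ i j * G y j m *
        pd3 (Bplus x r) k (fun w => (G w)⁻¹ m l) y
      = -∑ m, (G y)⁻¹ i j * pd3 (Bplus x r) k (fun w => G w j m) y * (G y)⁻¹ m l := by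
    intro j _
    calc ∑ m, (G y)⁻¹ i j * G y j m * pd3 (Bplus x r) k (fun w => (G w)⁻¹ m l) y
        = (G y)⁻¹ i j * ∑ m, G y j m * pd3 (Bplus x r) k (fun w => (G w)⁻¹ m l) y := by
          rw [Finset.mul_sum]
          exact Finset.sum_congr rfl fun m _ => by ring
    _ = (G y)⁻¹ i j * -∑ m, pd3 (Bplus x r) k (fun w => G w j m) y * (G y)⁻¹ m l := by
          rw [star' j]
    _ = -∑ m, (G y)⁻¹ i j * pd3 (Bplus x r) k (fun w => G w j m) y * (G y)⁻¹ m l := by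
          rw [mul_neg, Finset.mul_sum]
          congr 1
          exact Finset.sum_congr rfl fun m _ => by ring
  rw [Finset.sum_congr rfl e2]
  rw [← Finset.sum_neg_distrib]

end Gderiv

section Bdry

variable {x : E3} {r : ℝ} {G : Met3}

lemma pd2_iota {z : E2} (hz : z ∈ bot2 x r) (F : E3 → ℝ)
    (hF : DifferentiableWithinAt ℝ F (Bplus x r) (iota z)) (A : Fin 2) :
    pd2 (bot2 x r) A (fun w => F (iota w)) z
      = pd3 (Bplus x r) (emb23 A) F (iota z) := by
  have hmaps : Set.MapsTo iotaL (bot2 x r) (Bplus x r) := fun w hw => hw.1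
  have h1 := hF.hasFDerivWithinAt
  have h2 : HasFDerivWithinAt (fun w => F (iota w))
      ((fderivWithin ℝ F (Bplus x r) (iota z)).comp (iotaL : E2 →L[ℝ] E3))
      (bot2 x r) z :=
    HasFDerivWithinAt.comp z h1 iotaL.hasFDerivWithinAt hmaps
  have hu2 : UniqueDiffWithinAt ℝ (bot2 x r) z :=
    (isOpen_bot2 x r).uniqueDiffWithinAt hz
  unfold pd2 pd3
  rw [h2.fderivWithin hu2, ContinuousLinearMap.comp_apply]
  congr 1
  rw [iotaL_apply, iota_e2]

lemma Gamma2_eq (hG : IsRiemOnBplus x r G) {z : E2} (hz : z ∈ bot2 x r)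
    (C A B : Fin 2) :
    Γ2 (bot2 x r) (Gb G) z C A B
      = (1/2) * ∑ D : Fin 2, (indMet G (iota z))⁻¹ C D *
          (pd3 (Bplus x r) (emb23 A) (fun w => G w (emb23 B) (emb23 D)) (iota z)
           + pd3 (Bplus x r) (emb23 B) (fun w => G w (emb23 A) (emb23 D)) (iota z)
           - pd3 (Bplus x r) (emb23 D) (fun w => G w (emb23 A) (emb23 B)) (iota z)) := by
  unfold Γ2
  congr 1
  refine Finset.sum_congr rfl fun D _ => ?_
  congr 1
  have e1 : pd2 (bot2 x r) A (fun w => Gb G w B D) z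
      = pd3 (Bplus x r) (emb23 A) (fun w => G w (emb23 B) (emb23 D)) (iota z) :=
    pd2_iota hz (fun v => G v (emb23 B) (emb23 D)) (dwaG hG _ _ hz.1) A
  have e2 : pd2 (bot2 x r) B (fun w => Gb G w A D) z
      = pd3 (Bplus x r) (emb23 B) (fun w => G w (emb23 A) (emb23 D)) (iota z) :=
    pd2_iota hz (fun v => G v (emb23 A) (emb23 D)) (dwaG hG _ _ hz.1) B
  have e3' : pd2 (bot2 x r) D (fun w => Gb G w A B) z
      = pd3 (Bplus x r) (emb23 D) (fun w => G w (emb23 A) (emb23 B)) (iota z) :=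
    pd2_iota hz (fun v => G v (emb23 A) (emb23 B)) (dwaG hG _ _ hz.1) D
  rw [e1, e2, e3']

lemma harm2A (hG : IsRiemOnBplus x r G) (hbh : IsBdryHarmonic x r G)
    {z : E2} (hz : z ∈ bot2 x r) (A : Fin 2) :
    ∑ B : Fin 2, ∑ C : Fin 2, (indMet G (iota z))⁻¹ B C *
      ((1/2) * ∑ D : Fin 2, (indMet G (iota z))⁻¹ A D *
        (pd3 (Bplus x r) (emb23 B) (fun w => G w (emb23 C) (emb23 D)) (iota z)
         + pd3 (Bplus x r) (emb23 C) (fun w => G w (emb23 B) (emb23 D)) (iota z)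
         - pd3 (Bplus x r) (emb23 D) (fun w => G w (emb23 B) (emb23 C)) (iota z))) = 0 := by
  have h0 := hbh.2 z hz A
  unfold contrΓ2 at h0
  rw [Finset.sum_congr rfl (fun B _ => Finset.sum_congr rfl
    (fun C _ => by rw [Gamma2_eq hG hz A B C]))] at h0
  exact h0

end Bdry

end NeumannAnalytic


/-- **Neumann boundary relations in boundary harmonic coordinates** (Lemma 2.13): on
`B̲⁺(x,r)`, `N(g^{33}) = 2 (tr Θ) g^{33}` and
`N(g^{3A}) = (tr Θ) g^{3A} - ½ (g^{33})^{-1/2} g^{Am} ∂_m g^{33}`.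
(The paper's coordinate `x³` is the third coordinate, index `2`; paper indices `A ∈ {1,2}`
correspond to `emb23 A`.) -/
theorem neumann_relations_boundary_harmonic (x : E3) (r : ℝ) (hr : 0 < r) (G : Met3)
    (hG : IsRiemOnBplus x r G) (hbh : IsBdryHarmonic x r G) :
    ∀ z ∈ bot2 x r,
      (Nop (Bplus x r) G (fun w => (G w)⁻¹ 2 2) (iota z)
        = 2 * trTheta (Bplus x r) G (iota z) * (G (iota z))⁻¹ 2 2) ∧
      ∀ A : Fin 2,
        Nop (Bplus x r) G (fun w => (G w)⁻¹ 2 (emb23 A)) (iota z)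
          = trTheta (Bplus x r) G (iota z) * (G (iota z))⁻¹ 2 (emb23 A)
            - (1/2) * (1 / Real.sqrt ((G (iota z))⁻¹ 2 2)) *
              ∑ mm : Fin 3, (G (iota z))⁻¹ (emb23 A) mm *
                pd3 (Bplus x r) mm (fun w => (G w)⁻¹ 2 2) (iota z) := by
  intro z hz
  have hyB : iota z ∈ Bplus x r := hz.1
  have hud : UniqueDiffWithinAt ℝ (Bplus x r) (iota z) :=
    uniqueDiffOn_Bplus hz _ hyB
  have hsp := hG.1 (iota z) hyB
  have hgh := fun i j => mulInv_entries hsp.2 i j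
  have hhg := fun i j => invMul_entries hsp.2 i j
  have hsym := fun i j => inv_symm_entries hsp.1 i j
  have dgsym := fun k i j => pd3_G_symm hG hyB k i j
  have hdh := fun k i j => pd3_inv_formula hG hyB hud k i j
  have h22 : (G (iota z))⁻¹ 2 2 ≠ 0 := ne_of_gt (posdef_diag hsp.2.inv 2)
  have hblock : ∀ A B : Fin 2, (indMet G (iota z))⁻¹ A B
      = (G (iota z))⁻¹ (emb23 A) (emb23 B)
        - (G (iota z))⁻¹ 2 (emb23 A) * (G (iota z))⁻¹ 2 (emb23 B)
          / (G (iota z))⁻¹ 2 2 :=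
    fun A B => block_formula hsp.1 hsp.2 A B
  have hharm := fun k => hbh.1 (iota z) hyB k
  have hharm2 := fun A => harm2A hG hbh hz A
  have apull : ∀ c : ℝ, ∑ A : Fin 2, ∑ B : Fin 2, (indMet G (iota z))⁻¹ A B *
        (c * Γ3 (Bplus x r) G (iota z) 2 (emb23 A) (emb23 B))
      = c * ∑ A : Fin 2, ∑ B : Fin 2, (indMet G (iota z))⁻¹ A B *
          Γ3 (Bplus x r) G (iota z) 2 (emb23 A) (emb23 B) := by
    intro c
    simp only [Finset.mul_sum]
    exact Finset.sum_congr rfl fun A _ => Finset.sum_congr rfl fun B _ => by ring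
  constructor
  · have key1 : ∑ k, (G (iota z))⁻¹ 2 k *
          pd3 (Bplus x r) k (fun w => (G w)⁻¹ 2 2) (iota z)
        = 2 * (∑ A : Fin 2, ∑ B : Fin 2, (indMet G (iota z))⁻¹ A B *
            Γ3 (Bplus x r) G (iota z) 2 (emb23 A) (emb23 B)) * (G (iota z))⁻¹ 2 2 :=
      nC1 (g := fun i j => G (iota z) i j) (h := fun i j => (G (iota z))⁻¹ i j)
        (dg := fun k i j => pd3 (Bplus x r) k (fun w => G w i j) (iota z))
        (gi := fun A B => (indMet G (iota z))⁻¹ A B)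
        hgh hhg hsym dgsym
        (fun k i j => pd3 (Bplus x r) k (fun w => (G w)⁻¹ i j) (iota z))
        hdh h22 hblock (hharm 2)
    unfold Nop trTheta theta3
    rw [key1, apull]
    ring
  · intro A
    have key2 : ∑ k, (G (iota z))⁻¹ 2 k *
          pd3 (Bplus x r) k (fun w => (G w)⁻¹ 2 (emb23 A)) (iota z)
        = (∑ B : Fin 2, ∑ C : Fin 2, (indMet G (iota z))⁻¹ B C *
            Γ3 (Bplus x r) G (iota z) 2 (emb23 B) (emb23 C))
              * (G (iota z))⁻¹ 2 (emb23 A)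
          + (1/2) * ∑ m, (G (iota z))⁻¹ (emb23 A) m *
              pd3 (Bplus x r) m (fun w => (G w)⁻¹ 2 2) (iota z) :=
      nC2 (g := fun i j => G (iota z) i j) (h := fun i j => (G (iota z))⁻¹ i j)
        (dg := fun k i j => pd3 (Bplus x r) k (fun w => G w i j) (iota z))
        (gi := fun A B => (indMet G (iota z))⁻¹ A B)
        hgh hhg hsym dgsym
        (fun k i j => pd3 (Bplus x r) k (fun w => (G w)⁻¹ i j) (iota z))
        hdh h22 hblock A (hharm (emb23 A)) (hharm2 A)
    unfold Nop trTheta theta3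
    rw [key2, apull]
    ring
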